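/- Let H_t be a family of affine subspaces of ℝ^ν with rolling maps Φ(t,s) : H_s → H_t (affine isometries obeying Φ(u,t)∘Φ(t,s) = Φ(u,s), with ∂_u Φ(u,t)(x) orthogonal to the direction space of H_u for each fixed x). If f : I → H_t is C¹ and g(s) = Φ(s,t)(f(s)), then P(s,t)(f'(s)) = π(g'(s)), where P(s,t) is the linear part of Φ(s,t) and π is the orthogonal projection onto the direction space T(s) of H_s. -/

import Mathlib

open scoped RealInnerProductSpace
open Filter Topology

/-- If `f : I → H_t` is C¹ and `g(s) = Φ(s,t)(f(s))`, where `Φ` are the rolling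
maps with linear parts `P`, then `P(s,t)(f'(s)) = π(g'(s))`, with `π` the
orthogonal projection onto the direction space `T s` of `H_s`. -/

theorem rolling_derivative_is_projected_transport {ν : ℕ} (I : Set ℝ)
    (hIopen : IsOpen I) (hIconn : I.OrdConnected)
    (γ : ℝ → EuclideanSpace ℝ (Fin ν))
    (T : ℝ → Submodule ℝ (EuclideanSpace ℝ (Fin ν)))
    (Φ : ℝ → ℝ → EuclideanSpace ℝ (Fin ν) → EuclideanSpace ℝ (Fin ν))
    (P : ℝ → ℝ → EuclideanSpace ℝ (Fin ν) →ₗ[ℝ] EuclideanSpace ℝ (Fin ν))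
    (hinit : ∀ s x, Φ s s x = x)
    (hgroup : ∀ s t u x, Φ u t (Φ t s x) = Φ u s x)
    (hmem : ∀ s ∈ I, ∀ t ∈ I, ∀ x, x - γ s ∈ T s → Φ t s x - γ t ∈ T t)
    (haff : ∀ s t x v, Φ t s (x + v) = Φ t s x + P t s v)
    (hΦdiff : ∀ s ∈ I, ∀ x, Differentiable ℝ (fun r => Φ r s x))
    (hroll : ∀ s ∈ I, ∀ x, x - γ s ∈ T s →
      ∀ u ∈ I, ∀ w ∈ T u, ⟪deriv (fun r => Φ r s x) u, w⟫ = 0)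
    (t : ℝ) (ht : t ∈ I)
    (f : ℝ → EuclideanSpace ℝ (Fin ν)) (hf : ContDiff ℝ 1 f)
    (hfmem : ∀ s ∈ I, f s - γ t ∈ T t)
    (hgdiff : Differentiable ℝ (fun σ => Φ σ t (f σ))) :
    ∀ s ∈ I, P s t (deriv f s) =
      (Submodule.orthogonalProjectionOnto (T s) (deriv (fun σ => Φ σ t (f σ)) s) :
        EuclideanSpace ℝ (Fin ν)) := by
  intro s hs
  have hPdef : ∀ σ v, P σ t v = Φ σ t v - Φ σ t 0 := by
    intro σ v
    have := haff t σ 0 v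
    rw [zero_add] at this
    rw [this]; abel
  -- derivative of f lies in T t
  have hfd : DifferentiableAt ℝ f s := (hf.differentiable one_ne_zero) s
  have hf' : deriv f s ∈ T t := by
    have hd := hfd.hasDerivAt
    rw [hasDerivAt_iff_tendsto_slope] at hd
    refine (Submodule.closed_of_finiteDimensional (T t)).mem_of_tendsto hd ?_
    have hev : ∀ᶠ x in 𝓝[≠] s, x ∈ I :=
      eventually_nhdsWithin_of_eventually_nhds (hIopen.eventually_mem hs)
    filter_upwards [hev] with x hx
    have h1 : f x - f s ∈ T t := by
      have := (T t).sub_mem (hfmem x hx) (hfmem s hs)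
      simpa using this
    rw [slope_def_module]
    exact (T t).smul_mem _ h1
  -- M : operator-valued curve
  set M : ℝ → EuclideanSpace ℝ (Fin ν) →L[ℝ] EuclideanSpace ℝ (Fin ν) := fun σ => LinearMap.toContinuousLinearMap (P σ t) with hM
  -- M is differentiable using a basis
  have hMdiff : DifferentiableAt ℝ M s := by
    set b := Module.Basis.ofVectorSpace ℝ (EuclideanSpace ℝ (Fin ν))
    set v : ℝ → (Module.Basis.ofVectorSpaceIndex ℝ (EuclideanSpace ℝ (Fin ν))) → EuclideanSpace ℝ (Fin ν) :=
      fun σ i => Φ σ t (b i) - Φ σ t 0 with hv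
    have hvdiff : DifferentiableAt ℝ v s := by
      rw [differentiableAt_pi]
      intro i
      exact ((hΦdiff t ht (b i)) s).sub ((hΦdiff t ht 0) s)
    set L : ((Module.Basis.ofVectorSpaceIndex ℝ (EuclideanSpace ℝ (Fin ν))) → EuclideanSpace ℝ (Fin ν)) →ₗ[ℝ] (EuclideanSpace ℝ (Fin ν) →L[ℝ] EuclideanSpace ℝ (Fin ν)) :=
      (LinearMap.toContinuousLinearMap.toLinearMap).comp (b.constr ℝ).toLinearMap with hL
    have hMeq : M = fun σ => LinearMap.toContinuousLinearMap L (v σ) := by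
      funext σ
      have : P σ t = b.constr ℝ (v σ) := by
        apply b.ext
        intro i
        rw [Module.Basis.constr_basis]
        exact hPdef σ (b i)
      simp only [hM, hL, LinearMap.coe_toContinuousLinearMap', LinearMap.coe_comp,
        Function.comp_apply, LinearEquiv.coe_coe]
      rw [this]
    rw [hMeq]
    exact ((LinearMap.toContinuousLinearMap L).differentiable (v s)).comp s hvdiff
  -- derivative decomposition
  have hA0 : DifferentiableAt ℝ (fun σ => Φ σ t 0) s := (hΦdiff t ht 0) s
  have hgd : HasDerivAt (fun σ => Φ σ t (f σ))
      (deriv (fun σ => Φ σ t 0) s + ((deriv M s) (f s) + M s (deriv f s))) s := by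
    have h1 : HasDerivAt (fun σ => M σ (f σ)) ((deriv M s) (f s) + M s (deriv f s)) s :=
      (hMdiff.hasDerivAt).clm_apply hfd.hasDerivAt
    have h2 := hA0.hasDerivAt.add h1
    convert h2 using 1
    case e'_4 => rfl
    case e'_5 => rfl
    case e'_6 => rfl
    funext σ
    show Φ σ t (f σ) = Φ σ t 0 + P σ t (f σ)
    have := haff t σ 0 (f σ)
    rwa [zero_add] at this
  have hBd : HasDerivAt (fun σ => Φ σ t (f s))
      (deriv (fun σ => Φ σ t 0) s + ((deriv M s) (f s) + M s 0)) s := by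
    have h1 : HasDerivAt (fun σ => M σ (f s)) ((deriv M s) (f s) + M s 0) s :=
      (hMdiff.hasDerivAt).clm_apply (hasDerivAt_const s (f s))
    have h2 := hA0.hasDerivAt.add h1
    convert h2 using 1
    case e'_4 => rfl
    case e'_5 => rfl
    case e'_6 => rfl
    funext σ
    show Φ σ t (f s) = Φ σ t 0 + P σ t (f s)
    have := haff t σ 0 (f s)
    rwa [zero_add] at this
  have hgderiv : deriv (fun σ => Φ σ t (f σ)) s
      = deriv (fun σ => Φ σ t (f s)) s + P s t (deriv f s) := by
    rw [hgd.deriv, hBd.deriv]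
    simp only [map_zero, add_zero, hM, LinearMap.coe_toContinuousLinearMap']
    abel
  -- first part is orthogonal to T s
  have hBorth : deriv (fun σ => Φ σ t (f s)) s ∈ (T s)ᗮ := by
    rw [Submodule.mem_orthogonal']
    intro w hw
    exact hroll t ht (f s) (hfmem s hs) s hs w hw
  -- second part is in T s
  have hPmem : P s t (deriv f s) ∈ T s := by
    have h1 := hmem t ht s hs (f s + deriv f s) (by simpa [add_sub_right_comm] using (T t).add_mem (hfmem s hs) hf')
    have h2 := hmem t ht s hs (f s) (hfmem s hs)
    have h3 : Φ s t (f s + deriv f s) = Φ s t (f s) + P s t (deriv f s) := haff t s (f s) (deriv f s)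
    have := (T s).sub_mem h1 h2
    rw [h3] at this
    simpa using this
  rw [hgderiv, map_add,
    Submodule.orthogonalProjectionOnto_apply_of_mem_orthogonal hBorth, zero_add,
    ← Submodule.starProjection_apply, Submodule.starProjection_eq_self_iff.mpr hPmem]
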